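/- Two good semigroups S, S′ ⊆ ℕ^n are equal if and only if Small(S) = Small(S′), where Small(S) = { a ∈ S : a ≤ C(S) } and C(S) is the conductor of S. -/

import Mathlib

/-- A good semigroup of `ℕ^n`: a submonoid satisfying (G1), (G2), (G3). -/
def IsGoodSemigroup {n : ℕ} (S : Set (Fin n → ℕ)) : Prop :=
  0 ∈ S ∧ (∀ a ∈ S, ∀ b ∈ S, a + b ∈ S) ∧
  (∀ a ∈ S, ∀ b ∈ S, a ⊓ b ∈ S) ∧
  (∀ a ∈ S, ∀ b ∈ S, ∀ i, a i = b i →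
    ∃ c ∈ S, a i < c i ∧ (∀ j, j ≠ i → min (a j) (b j) ≤ c j) ∧
      (∀ j, j ≠ i → a j ≠ b j → c j = min (a j) (b j))) ∧
  (∃ C, ∀ x, C ≤ x → x ∈ S)

/-- `C` is the conductor of `S ⊆ ℕ^n`. -/
def IsConductor {n : ℕ} (S : Set (Fin n → ℕ)) (C : Fin n → ℕ) : Prop :=
  (∀ x, C ≤ x → x ∈ S) ∧ ∀ C', (∀ x, C' ≤ x → x ∈ S) → C ≤ C'

/-- Single growth step: if `b ∈ S` and `b i ≥ C i`, one can strictly increase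
the `i`-th coordinate of `b` staying in `S`, keeping the others fixed. -/
lemma good_step {n : ℕ} {S : Set (Fin n → ℕ)} (hS : IsGoodSemigroup S)
    {C : Fin n → ℕ} (hCmem : ∀ x, C ≤ x → x ∈ S)
    {b : Fin n → ℕ} (hb : b ∈ S) (i : Fin n) (hbi : C i ≤ b i) :
    ∃ s, b i < s ∧ Function.update b i s ∈ S := by
  obtain ⟨-, -, hinf, hG2, -⟩ := hS
  have hd : (b ⊔ C) ∈ S := hCmem _ le_sup_right
  have hbi' : b i = (b ⊔ C) i := by
    simp only [Pi.sup_apply]; omega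
  obtain ⟨c, hc, hci, hmin, heq⟩ := hG2 b hb _ hd i hbi'
  refine ⟨c i, hci, ?_⟩
  have hz : Function.update (b ⊔ C) i (c i) ∈ S := by
    apply hCmem
    intro j
    by_cases hj : j = i
    · subst hj; simp only [Function.update_self]; omega
    · simp only [Function.update_of_ne hj, Pi.sup_apply]; omega
  have hmem := hinf c hc _ hz
  have hEq : c ⊓ Function.update (b ⊔ C) i (c i) = Function.update b i (c i) := by
    funext j
    by_cases hj : j = i
    · subst hj; simp [Pi.inf_apply]
    · have h1 : min (b j) ((b ⊔ C) j) ≤ c j := hmin j hj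
      simp only [Pi.inf_apply, Function.update_of_ne hj, Pi.sup_apply] at *
      rcases eq_or_ne (b j) ((b ⊔ C) j) with h | h
      · simp only [Pi.sup_apply] at h
        omega
      · have := heq j hj (by simpa [Pi.sup_apply] using h)
        omega
  rwa [hEq] at hmem

/-- One can reach arbitrarily high values of the `i`-th coordinate. -/
lemma good_reach {n : ℕ} {S : Set (Fin n → ℕ)} (hS : IsGoodSemigroup S)
    {C : Fin n → ℕ} (hCmem : ∀ x, C ≤ x → x ∈ S)
    {b : Fin n → ℕ} (hb : b ∈ S) (i : Fin n) (hbi : C i ≤ b i) (m : ℕ) :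
    ∃ s, m ≤ s ∧ b i ≤ s ∧ Function.update b i s ∈ S := by
  induction m with
  | zero =>
    refine ⟨b i, Nat.zero_le _, le_rfl, ?_⟩
    simpa [Function.update_eq_self] using hb
  | succ m ih =>
    obtain ⟨s, hms, hbs, hmem⟩ := ih
    rcases Nat.lt_or_ge m s with h | h
    · exact ⟨s, h, hbs, hmem⟩
    · have hs : s = m := le_antisymm h hms
      have hCi : C i ≤ (Function.update b i s) i := by
        simp only [Function.update_self]; omega
      obtain ⟨s', hs', hmem'⟩ := good_step hS hCmem hmem i hCi
      simp only [Function.update_self] at hs'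
      refine ⟨s', by omega, by omega, ?_⟩
      rwa [Function.update_idem] at hmem'

/-- One can reach any target value `t ≥ b i` of the `i`-th coordinate exactly. -/
lemma good_update {n : ℕ} {S : Set (Fin n → ℕ)} (hS : IsGoodSemigroup S)
    {C : Fin n → ℕ} (hCmem : ∀ x, C ≤ x → x ∈ S)
    {b : Fin n → ℕ} (hb : b ∈ S) (i : Fin n) (hbi : C i ≤ b i) {t : ℕ} (ht : b i ≤ t) :
    Function.update b i t ∈ S := by
  have hinf := hS.2.2.1
  obtain ⟨s, hts, hbs, hmem⟩ := good_reach hS hCmem hb i hbi t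
  have hz : Function.update (b ⊔ C) i t ∈ S := by
    apply hCmem
    intro j
    by_cases hj : j = i
    · subst hj; simp only [Function.update_self]; omega
    · simp only [Function.update_of_ne hj, Pi.sup_apply]; omega
  have hmem2 := hinf _ hmem _ hz
  have hEq : Function.update b i s ⊓ Function.update (b ⊔ C) i t
      = Function.update b i t := by
    funext j
    by_cases hj : j = i
    · subst hj; simp only [Pi.inf_apply, Function.update_self]; omega
    · simp only [Pi.inf_apply, Function.update_of_ne hj, Pi.sup_apply]; omega
  rwa [hEq] at hmem2

lemma good_subset {n : ℕ} {S S' : Set (Fin n → ℕ)}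
    (hS : IsGoodSemigroup S) (hS' : IsGoodSemigroup S') (C : Fin n → ℕ)
    (hCS : ∀ x, C ≤ x → x ∈ S) (hCS' : ∀ x, C ≤ x → x ∈ S')
    (hsmall : ∀ a, a ∈ S → a ≤ C → a ∈ S') : S ⊆ S' := by
  intro a ha
  have hCmemS : C ∈ S := hCS C le_rfl
  have hinfS : a ⊓ C ∈ S := hS.2.2.1 a ha C hCmemS
  have hinfS' : a ⊓ C ∈ S' := hsmall _ hinfS (fun j => by simp [Pi.inf_apply])
  have key : ∀ T : Finset (Fin n),
      (fun j => if j ∈ T then a j else min (a j) (C j)) ∈ S' := by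
    intro T
    induction T using Finset.induction with
    | empty => simpa [Pi.inf_apply] using (show (fun j => min (a j) (C j)) ∈ S' from hinfS')
    | @insert i T hiT ih =>
      rcases le_or_gt (a i) (C i) with h | h
      · have hEq : (fun j => if j ∈ insert i T then a j else min (a j) (C j))
            = (fun j => if j ∈ T then a j else min (a j) (C j)) := by
          funext j
          by_cases hj : j = i
          · subst hj; simp [hiT, Nat.min_eq_left h]
          · simp [Finset.mem_insert, hj]
        rw [hEq]; exact ih
      · set b := (fun j => if j ∈ T then a j else min (a j) (C j)) with hbdef
        have hbi : b i = C i := by simp [hbdef, hiT]; omega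
        have hEq : (fun j => if j ∈ insert i T then a j else min (a j) (C j))
            = Function.update b i (a i) := by
          funext j
          by_cases hj : j = i
          · subst hj; simp [hbdef]
          · simp [Function.update_of_ne hj, hbdef, Finset.mem_insert, hj]
        rw [hEq]
        exact good_update hS' hCS' ih i (by omega) (by omega)
  have := key Finset.univ
  simpa using this

theorem eq_iff_small_eq {n : ℕ} (S S' : Set (Fin n → ℕ))
    (hS : IsGoodSemigroup S) (hS' : IsGoodSemigroup S')
    (C C' : Fin n → ℕ) (hC : IsConductor S C) (hC' : IsConductor S' C') :
    S = S' ↔ {a ∈ S | a ≤ C} = {a ∈ S' | a ≤ C'} := by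
  constructor
  · intro h
    subst h
    have hCC' : C = C' := le_antisymm (hC.2 C' hC'.1) (hC'.2 C hC.1)
    rw [hCC']
  · intro h
    have hCsmall : C ∈ {a ∈ S | a ≤ C} := ⟨hC.1 C le_rfl, le_rfl⟩
    have hC'small : C' ∈ {a ∈ S' | a ≤ C'} := ⟨hC'.1 C' le_rfl, le_rfl⟩
    have h1 : C ∈ S' ∧ C ≤ C' := by have := h ▸ hCsmall; exact this
    have h2 : C' ∈ S ∧ C' ≤ C := by have := h.symm ▸ hC'small; exact this
    have hCC' : C = C' := le_antisymm h1.2 h2.2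
    subst hCC'
    apply Set.Subset.antisymm
    · exact good_subset hS hS' C hC.1 hC'.1 (fun a ha hle => ((h ▸ (⟨ha, hle⟩ : a ∈ {a ∈ S | a ≤ C})) : a ∈ {a ∈ S' | a ≤ C}).1)
    · exact good_subset hS' hS C hC'.1 hC.1 (fun a ha hle => ((h.symm ▸ (⟨ha, hle⟩ : a ∈ {a ∈ S' | a ≤ C})) : a ∈ {a ∈ S | a ≤ C}).1)
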